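/- Every execution of Algorithm 1 starting from a skew Young diagram λ/μ terminates after finitely many steps: there is no infinite sequence D_0 = λ/μ, D_1, D_2, … in which each D_{t+1} is obtained from D_t by a permitted Step A or Step B at the maximum row i with l_{i−1} > l_i. Moreover, in the terminal diagram the l_i are weakly increasing and the r_i are weakly decreasing (ignoring empty rows), so its nonempty row lengths, read from top to bottom, form a weakly decreasing sequence, i.e., right-justifying all rows yields the Young diagram of a partition justified to the northeast. -/

import Mathlib

open scoped ENat

/-- A diagram: a finite set of boxes `(i, j)` (row `i` from the top, column `j` from the left). -/
abbrev Dg := Finset (ℕ × ℕ)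

/-- The set of column indices of boxes in row `i` of `D`. -/
def row (D : Dg) (i : ℕ) : Finset ℕ := (D.filter (fun b => b.1 = i)).image Prod.snd

/-- `l_i`: the least column index in row `i`, with the convention `l_i = ∞` for an empty row. -/
noncomputable def lRow (D : Dg) (i : ℕ) : ℕ∞ := (row D i).inf (fun j => (j : ℕ∞))

/-- `r_i`: the greatest column index in row `i`, with the convention `r_i = 0` for an empty row. -/
def rRow (D : Dg) (i : ℕ) : ℕ := (row D i).sup id

/-- Index `i ≥ 2` with `l_{i-1} > l_i`. -/
def Violation (D : Dg) (i : ℕ) : Prop := 2 ≤ i ∧ lRow D i < lRow D (i - 1)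

/-- `i` is the maximum index with `l_{i-1} > l_i`. -/
def MaxViolation (D : Dg) (i : ℕ) : Prop := Violation D i ∧ ∀ i', Violation D i' → i' ≤ i

/-- No index `i ≥ 2` has `l_{i-1} > l_i`. -/
def TerminalD (D : Dg) : Prop := ∀ i, ¬ Violation D i

/-- Step A is permitted at row `i`: `l_{i-1} > l_i` and (`r_i ≥ l_{i-1} - 1` or row `i-1` empty). -/
def StepAOk (D : Dg) (i : ℕ) : Prop :=
  Violation D i ∧ (lRow D (i - 1) - 1 ≤ (rRow D i : ℕ∞) ∨ row D (i - 1) = ∅)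

/-- `l_i ≤ q < l_{i-1}`: the columns affected by Step A at row `i`. -/
def InL (D : Dg) (i q : ℕ) : Prop := lRow D i ≤ (q : ℕ∞) ∧ (q : ℕ∞) < lRow D (i - 1)

/-- `D'` is the result of performing Step A on `D` at row `i`: for each column
`l_i ≤ q < l_{i-1}`, membership of `(i, q)` and `(i-1, q)` is exchanged. -/
def IsStepA (D D' : Dg) (i : ℕ) : Prop :=
  ∀ p q : ℕ,
    (p = i → InL D i q → ((p, q) ∈ D' ↔ (i - 1, q) ∈ D)) ∧
    (p = i - 1 → InL D i q → ((p, q) ∈ D' ↔ (i, q) ∈ D)) ∧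
    (¬((p = i ∨ p = i - 1) ∧ InL D i q) → ((p, q) ∈ D' ↔ (p, q) ∈ D))

/-- Step B is permitted at row `i`: `l_{i-1} > l_i` and `r_i ≤ r_{i-1} - 1`. -/
def StepBOk (D : Dg) (i : ℕ) : Prop :=
  Violation D i ∧ rRow D i ≤ rRow D (i - 1) - 1

/-- The rows affected by Step B at row `i`: rows `p ≥ i` with `l_p = l_i`. -/
def BRow (D : Dg) (i p : ℕ) : Prop := i ≤ p ∧ lRow D p = lRow D i

/-- `D'` is the result of performing Step B on `D` at row `i`: in each row `p ≥ i` with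
`l_p = l_i`, the box `(p, l_p)` is removed and the box `(p, r_p + 1)` is added. -/
def IsStepB (D D' : Dg) (i : ℕ) : Prop :=
  ∀ p q : ℕ,
    (BRow D i p →
      ((p, q) ∈ D' ↔ (((p, q) ∈ D ∧ (q : ℕ∞) ≠ lRow D p) ∨ q = rRow D p + 1))) ∧
    (¬ BRow D i p → ((p, q) ∈ D' ↔ (p, q) ∈ D))

/-- One step of Algorithm 1: at the maximum index `i` with `l_{i-1} > l_i`, perform a
permitted Step A or Step B. -/
def AlgStep (D D' : Dg) : Prop :=
  ∃ i, MaxViolation D i ∧ ((StepAOk D i ∧ IsStepA D D' i) ∨ (StepBOk D i ∧ IsStepB D D' i))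

/-- An execution of Algorithm 1 starting from `D0`: a finite sequence of diagrams beginning
at `D0`, each obtained from the previous by a step of Algorithm 1, ending at a terminal
diagram. -/
def IsExec (D0 : Dg) (L : List Dg) : Prop :=
  L.head? = some D0 ∧ L.Chain' AlgStep ∧ ∀ Dl, L.getLast? = some Dl → TerminalD Dl

/-- The indices of nonempty rows of `D`, from top to bottom. -/
def rowIdx (D : Dg) : List ℕ := (D.image Prod.fst).sort (· ≤ ·)

/-- The lengths of the nonempty rows of `D`, read from top to bottom. -/
def rowLengths (D : Dg) : List ℕ := (rowIdx D).map (fun p => (row D p).card)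

/-- The execution `L` terminates at a diagram whose nonempty rows, read from top to bottom,
have lengths `ν 1, ν 2, …`. -/
def EndsAt (L : List Dg) (ν : ℕ → ℕ) : Prop :=
  ∃ Dl, L.getLast? = some Dl ∧ ∀ m : ℕ, (rowLengths Dl).getD m 0 = ν (m + 1)

/-- A partition, written as a weakly decreasing function on indices `1, 2, …`. -/
def IsPartition (f : ℕ → ℕ) : Prop := f 0 = 0 ∧ ∀ p, 1 ≤ p → f (p + 1) ≤ f p

/-- The partition `f` is contained in the `k × w` rectangle. -/
def InRect (f : ℕ → ℕ) (k w : ℕ) : Prop := (∀ p, k < p → f p = 0) ∧ ∀ p, f p ≤ w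

/-- The skew Young diagram `lam / mu` (boxes of `lam` not in `mu`), rows `1, …, k`. -/
def skewD (lam mu : ℕ → ℕ) (k : ℕ) : Dg :=
  (Finset.Icc 1 k).biUnion (fun p => (Finset.Icc (mu p + 1) (lam p)).image (fun q => (p, q)))

/-- `lam^∨`, the complementary partition of `lam` inside the `k × w` rectangle. -/
def dualP (lam : ℕ → ℕ) (k w : ℕ) : ℕ → ℕ :=
  fun p => if 1 ≤ p ∧ p ≤ k then w - lam (k + 1 - p) else 0

lemma mem_row {D : Dg} {p q : ℕ} : q ∈ row D p ↔ (p, q) ∈ D := by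
  simp only [row, Finset.mem_image, Finset.mem_filter]
  constructor
  · rintro ⟨⟨a,b⟩, ⟨hm, rfl⟩, rfl⟩; exact hm
  · intro h; exact ⟨(p,q), ⟨h, rfl⟩, rfl⟩

/-- `lNat`: least column as a natural. -/
noncomputable def lNat (D : Dg) (p : ℕ) : ℕ := sInf {q | (p, q) ∈ D}

lemma lRow_le {D : Dg} {p q : ℕ} (h : (p, q) ∈ D) : lRow D p ≤ (q : ℕ∞) :=
  Finset.inf_le (mem_row.2 h)

lemma le_rRow {D : Dg} {p q : ℕ} (h : (p, q) ∈ D) : q ≤ rRow D p :=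
  Finset.le_sup (f := id) (mem_row.2 h)

lemma lRow_eq_top {D : Dg} {p : ℕ} : lRow D p = ⊤ ↔ row D p = ∅ := by
  rw [lRow, Finset.inf_eq_top_iff]
  constructor
  · intro h
    by_contra hne
    obtain ⟨q, hq⟩ := Finset.nonempty_of_ne_empty hne
    exact (ENat.coe_ne_top q) (h q hq)
  · intro h; simp [h]

lemma lRow_lt_top_of_mem {D : Dg} {p q : ℕ} (h : (p, q) ∈ D) : lRow D p < ⊤ :=
  lt_of_le_of_lt (lRow_le h) (ENat.coe_lt_top q)

lemma row_nonempty_iff {D : Dg} {p : ℕ} : (row D p).Nonempty ↔ lRow D p ≠ ⊤ := by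
  rw [Ne, lRow_eq_top, Finset.nonempty_iff_ne_empty]

lemma lNat_mem {D : Dg} {p : ℕ} (h : (row D p).Nonempty) : (p, lNat D p) ∈ D := by
  obtain ⟨q, hq⟩ := h
  exact Nat.sInf_mem (⟨q, mem_row.1 hq⟩ : {q | (p, q) ∈ D}.Nonempty)

lemma lNat_le {D : Dg} {p q : ℕ} (h : (p, q) ∈ D) : lNat D p ≤ q := Nat.sInf_le h

lemma rRow_mem {D : Dg} {p : ℕ} (h : (row D p).Nonempty) : (p, rRow D p) ∈ D := by
  have h1 : rRow D p = (row D p).max' h := by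
    apply le_antisymm
    · exact Finset.sup_le fun b hb => Finset.le_max' _ _ hb
    · exact Finset.le_sup (f := id) (Finset.max'_mem _ h)
  rw [h1]; exact mem_row.1 (Finset.max'_mem _ h)

lemma lRow_eq_lNat {D : Dg} {p : ℕ} (h : (row D p).Nonempty) :
    lRow D p = (lNat D p : ℕ∞) := by
  apply le_antisymm
  · exact lRow_le (lNat_mem h)
  · exact Finset.le_inf fun b hb => by exact_mod_cast lNat_le (mem_row.1 hb)

lemma row_nonempty_of_lRow_lt {D : Dg} {p : ℕ} {c : ℕ∞} (h : lRow D p < c) :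
    (row D p).Nonempty := row_nonempty_iff.2 (ne_top_of_lt h)

lemma lNat_le_rRow {D : Dg} {p : ℕ} (h : (row D p).Nonempty) : lNat D p ≤ rRow D p :=
  le_rRow (lNat_mem h)

/-- The invariant: boxes in the `[1,k] × [1,w]` grid, every row an interval,
`r` weakly decreasing over nonempty rows. -/
def InvD (k w : ℕ) (D : Dg) : Prop :=
  (∀ b ∈ D, 1 ≤ b.1 ∧ b.1 ≤ k ∧ 1 ≤ b.2 ∧ b.2 ≤ w) ∧
  (∀ p q, (row D p).Nonempty → lNat D p ≤ q → q ≤ rRow D p → (p, q) ∈ D) ∧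
  (∀ p q, p < q → (row D p).Nonempty → (row D q).Nonempty → rRow D q ≤ rRow D p)

section StepA
variable {D D' : Dg} {i : ℕ}

/-- columns affected by step A. -/
noncomputable def affA (D : Dg) (i : ℕ) : Finset ℕ :=
  (row D i).filter (fun q => (q : ℕ∞) < lRow D (i - 1))

lemma mem_affA {q : ℕ} : q ∈ affA D i ↔ (i, q) ∈ D ∧ (q : ℕ∞) < lRow D (i - 1) := by
  simp [affA, Finset.mem_filter, mem_row]

lemma inL_of_affA {q : ℕ} (h : q ∈ affA D i) : InL D i q :=
  ⟨lRow_le (mem_affA.1 h).1, (mem_affA.1 h).2⟩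

lemma violation_row_nonempty (hv : Violation D i) : (row D i).Nonempty :=
  row_nonempty_of_lRow_lt hv.2

lemma not_memA_up {q : ℕ} (h : InL D i q) : (i - 1, q) ∉ D :=
  fun hm => absurd (lRow_le hm) (not_le.2 h.2)

lemma lNat_mem_affA (hv : Violation D i) : lNat D i ∈ affA D i := by
  have hne := violation_row_nonempty hv
  exact mem_affA.2 ⟨lNat_mem hne, by rw [← lRow_eq_lNat hne]; exact hv.2⟩

lemma stepA_eq (hv : Violation D i) (hA : IsStepA D D' i) :
    D' = (D \ (affA D i).image (fun q => (i, q))) ∪ (affA D i).image (fun q => (i - 1, q)) := by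
  have h2i : 2 ≤ i := hv.1
  have hine : i - 1 ≠ i := by omega
  ext ⟨p, q⟩
  simp only [Finset.mem_union, Finset.mem_sdiff, Finset.mem_image, Prod.mk.injEq]
  obtain ⟨h1, h2, h3⟩ := hA p q
  by_cases hpi : p = i
  · obtain rfl : i = p := hpi.symm
    by_cases hq : InL D i q
    · rw [h1 rfl hq]
      constructor
      · intro hm; exact absurd hm (not_memA_up hq)
      · rintro (⟨hm, hno⟩ | ⟨a, ha, hfst, rfl⟩)
        · exact absurd ⟨q, mem_affA.2 ⟨hm, hq.2⟩, rfl, rfl⟩ hno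
        · exact absurd hfst hine
    · rw [h3 (fun hc => hq hc.2)]
      constructor
      · intro hm
        refine Or.inl ⟨hm, ?_⟩
        rintro ⟨a, ha, _, rfl⟩
        exact hq (inL_of_affA ha)
      · rintro (⟨hm, _⟩ | ⟨a, ha, hfst, rfl⟩)
        · exact hm
        · exact absurd hfst hine
  · by_cases hpi' : p = i - 1
    · subst hpi'
      by_cases hq : InL D i q
      · rw [h2 rfl hq]
        constructor
        · intro hm
          exact Or.inr ⟨q, mem_affA.2 ⟨hm, hq.2⟩, rfl, rfl⟩
        · rintro (⟨hm, _⟩ | ⟨a, ha, _, rfl⟩)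
          · exact absurd hm (not_memA_up hq)
          · exact (mem_affA.1 ha).1
      · rw [h3 (fun hc => hq hc.2)]
        constructor
        · intro hm
          refine Or.inl ⟨hm, ?_⟩
          rintro ⟨a, ha, hfst, rfl⟩
          exact hq (inL_of_affA ha)
        · rintro (⟨hm, _⟩ | ⟨a, ha, _, rfl⟩)
          · exact hm
          · exact absurd (inL_of_affA ha) hq
    · rw [h3 (fun hc => by rcases hc.1 with h | h <;> [exact hpi h; exact hpi' h])]
      constructor
      · intro hm
        refine Or.inl ⟨hm, ?_⟩
        rintro ⟨a, ha, hfst, rfl⟩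
        exact hpi hfst.symm
      · rintro (⟨hm, _⟩ | ⟨a, ha, hfst, rfl⟩)
        · exact hm
        · exact absurd hfst.symm hpi'

end StepA

-- generic helpers
lemma row_eq_of_mem_iff {D D' : Dg} {p : ℕ} (h : ∀ q, (p, q) ∈ D' ↔ (p, q) ∈ D) :
    row D' p = row D p := by
  ext q; rw [mem_row, mem_row, h]

lemma lNat_eq_of_row_eq {D D' : Dg} {p : ℕ} (h : row D' p = row D p) :
    lNat D' p = lNat D p := by
  unfold lNat
  congr 1
  ext q
  simp only [Set.mem_setOf_eq, ← mem_row, h]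

lemma rRow_eq_of_row_eq {D D' : Dg} {p : ℕ} (h : row D' p = row D p) :
    rRow D' p = rRow D p := by rw [rRow, rRow, h]

lemma lRow_eq_of_row_eq {D D' : Dg} {p : ℕ} (h : row D' p = row D p) :
    lRow D' p = lRow D p := by rw [lRow, lRow, h]

/-- From a description of a row as an interval, interval property + bounds. -/
lemma iv_of_desc {D : Dg} {p a b : ℕ} (h : ∀ q, (p, q) ∈ D ↔ a ≤ q ∧ q ≤ b) :
    ∀ q, (row D p).Nonempty → lNat D p ≤ q → q ≤ rRow D p → (p, q) ∈ D := by
  intro q hne hl hr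
  have ha : a ≤ lNat D p := ((h _).1 (lNat_mem hne)).1
  have hb : rRow D p ≤ b := ((h _).1 (rRow_mem hne)).2
  exact (h q).2 ⟨le_trans ha hl, le_trans hr hb⟩

lemma rRow_of_desc {D : Dg} {p a b : ℕ} (h : ∀ q, (p, q) ∈ D ↔ a ≤ q ∧ q ≤ b)
    (hab : a ≤ b) : rRow D p = b := by
  have hb : (p, b) ∈ D := (h b).2 ⟨hab, le_refl b⟩
  exact le_antisymm (by
    by_contra hlt
    push_neg at hlt
    have hne : (row D p).Nonempty := ⟨b, mem_row.2 hb⟩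
    exact absurd ((h _).1 (rRow_mem hne)).2 (not_le.2 hlt)) (le_rRow hb)

lemma nonempty_of_desc {D : Dg} {p a b : ℕ} (h : ∀ q, (p, q) ∈ D ↔ a ≤ q ∧ q ≤ b)
    (hab : a ≤ b) : (row D p).Nonempty := ⟨b, mem_row.2 ((h b).2 ⟨hab, le_refl b⟩)⟩

lemma empty_of_desc {D : Dg} {p : ℕ} (h : ∀ q, (p, q) ∉ D) : row D p = ∅ := by
  rw [Finset.eq_empty_iff_forall_notMem]
  intro q hq; exact h q (mem_row.1 hq)

lemma mem_iff_of_inv {k w : ℕ} {D : Dg} (hinv : InvD k w D) {p : ℕ}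
    (hne : (row D p).Nonempty) (q : ℕ) :
    (p, q) ∈ D ↔ lNat D p ≤ q ∧ q ≤ rRow D p :=
  ⟨fun h => ⟨lNat_le h, le_rRow h⟩, fun h => hinv.2.1 p q hne h.1 h.2⟩

section StepAInv
variable {k w : ℕ} {D D' : Dg} {i : ℕ}

lemma rowA_i_mem (hv : Violation D i) (hA : IsStepA D D' i) (q : ℕ) :
    (i, q) ∈ D' ↔ ((i, q) ∈ D ∧ lRow D (i - 1) ≤ (q : ℕ∞)) := by
  have h2i : 2 ≤ i := hv.1
  rw [stepA_eq hv hA]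
  simp only [Finset.mem_union, Finset.mem_sdiff, Finset.mem_image, Prod.mk.injEq]
  constructor
  · rintro (⟨hm, hno⟩ | ⟨a, ha, hfst, rfl⟩)
    · refine ⟨hm, ?_⟩
      by_contra hlt
      push_neg at hlt
      exact hno ⟨q, mem_affA.2 ⟨hm, hlt⟩, trivial, rfl⟩
    · omega
  · rintro ⟨hm, hle⟩
    refine Or.inl ⟨hm, ?_⟩
    rintro ⟨a, ha, _, rfl⟩
    exact absurd hle (not_le.2 (mem_affA.1 ha).2)

lemma rowA_im_mem (hv : Violation D i) (hA : IsStepA D D' i) (q : ℕ) :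
    (i - 1, q) ∈ D' ↔ ((i - 1, q) ∈ D ∨ q ∈ affA D i) := by
  have h2i : 2 ≤ i := hv.1
  rw [stepA_eq hv hA]
  simp only [Finset.mem_union, Finset.mem_sdiff, Finset.mem_image, Prod.mk.injEq]
  constructor
  · rintro (⟨hm, _⟩ | ⟨a, ha, _, rfl⟩)
    · exact Or.inl hm
    · exact Or.inr ha
  · rintro (hm | ha)
    · refine Or.inl ⟨hm, ?_⟩
      rintro ⟨a, ha, hfst, rfl⟩
      omega
    · exact Or.inr ⟨q, ha, trivial, rfl⟩

lemma rowA_other_mem (hv : Violation D i) (hA : IsStepA D D' i) {p : ℕ}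
    (hp1 : p ≠ i) (hp2 : p ≠ i - 1) (q : ℕ) : (p, q) ∈ D' ↔ (p, q) ∈ D := by
  rw [stepA_eq hv hA]
  simp only [Finset.mem_union, Finset.mem_sdiff, Finset.mem_image, Prod.mk.injEq]
  constructor
  · rintro (⟨hm, _⟩ | ⟨a, ha, hfst, rfl⟩)
    · exact hm
    · exact absurd hfst.symm hp2
  · intro hm
    refine Or.inl ⟨hm, ?_⟩
    rintro ⟨a, ha, hfst, rfl⟩
    exact hp1 hfst.symm

end StepAInv
lemma iv_transfer {D D' : Dg} {p : ℕ} (h : ∀ q, (p, q) ∈ D' ↔ (p, q) ∈ D)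
    (hIv : ∀ q, (row D p).Nonempty → lNat D p ≤ q → q ≤ rRow D p → (p, q) ∈ D) :
    ∀ q, (row D' p).Nonempty → lNat D' p ≤ q → q ≤ rRow D' p → (p, q) ∈ D' := by
  have hrow : row D' p = row D p := row_eq_of_mem_iff h
  intro q hne hl hr
  rw [h]
  exact hIv q (hrow ▸ hne) (lNat_eq_of_row_eq hrow ▸ hl) (rRow_eq_of_row_eq hrow ▸ hr)

section StepAInv2
variable {k w : ℕ} {D D' : Dg} {i : ℕ}

lemma enat_coe_lt_coe {a b : ℕ} : (a : ℕ∞) < (b : ℕ∞) ↔ a < b := by exact_mod_cast Iff.rfl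
lemma enat_coe_le_coe {a b : ℕ} : (a : ℕ∞) ≤ (b : ℕ∞) ↔ a ≤ b := by exact_mod_cast Iff.rfl

lemma stepA_invD (hinv : InvD k w D) (hok : StepAOk D i) (hA : IsStepA D D' i) :
    InvD k w D' := by
  obtain ⟨hgrid, hIv, hR⟩ := hinv
  have hv := hok.1
  have h2i : 2 ≤ i := hv.1
  have hnei : (row D i).Nonempty := violation_row_nonempty hv
  have hlni := lRow_eq_lNat hnei
  have hik : i ≤ k := (hgrid _ (lNat_mem hnei)).2.1
  have hgi : 1 ≤ lNat D i ∧ lNat D i ≤ w := by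
    have := hgrid _ (lNat_mem hnei); exact ⟨this.2.2.1, this.2.2.2⟩
  have memD_i : ∀ q, (i, q) ∈ D ↔ lNat D i ≤ q ∧ q ≤ rRow D i :=
    mem_iff_of_inv ⟨hgrid, hIv, hR⟩ hnei
  have hlri : lNat D i ≤ rRow D i := lNat_le_rRow hnei
  -- grid for D'
  have hgrid' : ∀ b ∈ D', 1 ≤ b.1 ∧ b.1 ≤ k ∧ 1 ≤ b.2 ∧ b.2 ≤ w := by
    intro b hb
    rw [stepA_eq hv hA, Finset.mem_union] at hb
    rcases hb with hb | hb
    · exact hgrid _ (Finset.mem_sdiff.1 hb).1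
    · rw [Finset.mem_image] at hb
      obtain ⟨a, ha, rfl⟩ := hb
      have := hgrid _ (mem_affA.1 ha).1
      exact ⟨by omega, by omega, this.2.2⟩
  by_cases he : row D (i - 1) = ∅
  · -- row i-1 empty: all of row i moves up
    have hTop : lRow D (i - 1) = ⊤ := lRow_eq_top.2 he
    have hDe : ∀ q, (i - 1, q) ∉ D := fun q hq => by
      have : q ∈ row D (i-1) := mem_row.2 hq
      rw [he] at this; exact absurd this (Finset.notMem_empty q)
    have desc_i' : ∀ q, (i, q) ∉ D' := by
      intro q hq
      rw [rowA_i_mem hv hA, hTop] at hq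
      exact absurd hq.2 (by simp)
    have desc_im' : ∀ q, (i - 1, q) ∈ D' ↔ lNat D i ≤ q ∧ q ≤ rRow D i := by
      intro q
      rw [rowA_im_mem hv hA]
      constructor
      · rintro (hm | ha)
        · exact absurd hm (hDe q)
        · exact (memD_i q).1 (mem_affA.1 ha).1
      · intro hq
        exact Or.inr (mem_affA.2 ⟨(memD_i q).2 hq, hTop ▸ ENat.coe_lt_top q⟩)
    have hrowi' : row D' i = ∅ := empty_of_desc desc_i'
    have hrm' : rRow D' (i - 1) = rRow D i := rRow_of_desc desc_im' hlri
    have hnem' : (row D' (i-1)).Nonempty := nonempty_of_desc desc_im' hlri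
    refine ⟨hgrid', ?_, ?_⟩
    · intro p q
      by_cases hp1 : p = i
      · obtain rfl : i = p := hp1.symm; intro hne'
        rw [hrowi'] at hne'; exact absurd hne' (by simp)
      · by_cases hp2 : p = i - 1
        · subst hp2; intro _ h1 h2; exact iv_of_desc desc_im' q hnem' h1 h2
        · exact iv_transfer (rowA_other_mem hv hA hp1 hp2) (hIv p) q
    · intro p q hpq hnep' hneq'
      have hother : ∀ r, r ≠ i → r ≠ i - 1 → row D' r = row D r :=
        fun r h1 h2 => row_eq_of_mem_iff (rowA_other_mem hv hA h1 h2)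
      by_cases hq1 : q = i
      · obtain rfl : i = q := hq1.symm; rw [hrowi'] at hneq'; exact absurd hneq' (by simp)
      · by_cases hq2 : q = i - 1
        · subst hq2
          rw [hrm']
          have hp1 : p ≠ i := by omega
          have hp2 : p ≠ i - 1 := by omega
          rw [rRow_eq_of_row_eq (hother p hp1 hp2)]
          exact hR p i (by omega) ((hother p hp1 hp2) ▸ hnep') hnei
        · rw [rRow_eq_of_row_eq (hother q hq1 hq2)]
          have hneq : (row D q).Nonempty := (hother q hq1 hq2) ▸ hneq'
          by_cases hp1 : p = i
          · obtain rfl : i = p := hp1.symm; rw [hrowi'] at hnep'; exact absurd hnep' (by simp)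
          · by_cases hp2 : p = i - 1
            · subst hp2; rw [hrm']
              exact hR i q (by omega) hnei hneq
            · rw [rRow_eq_of_row_eq (hother p hp1 hp2)]
              exact hR p q hpq ((hother p hp1 hp2) ▸ hnep') hneq
  · -- row i-1 nonempty
    have hne : (row D (i-1)).Nonempty := Finset.nonempty_of_ne_empty he
    have hlnm := lRow_eq_lNat hne
    have memD_im : ∀ q, (i - 1, q) ∈ D ↔ lNat D (i-1) ≤ q ∧ q ≤ rRow D (i-1) :=
      mem_iff_of_inv ⟨hgrid, hIv, hR⟩ hne
    have hlncn : lNat D i < lNat D (i-1) := by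
      have := hv.2; rw [hlni, hlnm] at this; exact_mod_cast this
    have hcn1 : 1 ≤ lNat D (i-1) := (hgrid _ (lNat_mem hne)).2.2.1
    have hperm : lNat D (i-1) ≤ rRow D i + 1 := by
      rcases hok.2 with hle | habs
      · rw [hlnm] at hle
        have : ((lNat D (i-1) - 1 : ℕ) : ℕ∞) ≤ (rRow D i : ℕ∞) := by
          rwa [ENat.coe_sub, Nat.cast_one]
        have := enat_coe_le_coe.1 this
        omega
      · exact absurd habs he
    have hcnrm : lNat D (i-1) ≤ rRow D (i-1) := lNat_le_rRow hne
    have haffA : ∀ q, q ∈ affA D i ↔ lNat D i ≤ q ∧ q < lNat D (i-1) := by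
      intro q
      rw [mem_affA, memD_i, hlnm, enat_coe_lt_coe]
      omega
    have desc_i' : ∀ q, (i, q) ∈ D' ↔ lNat D (i-1) ≤ q ∧ q ≤ rRow D i := by
      intro q
      rw [rowA_i_mem hv hA, memD_i, hlnm, enat_coe_le_coe]
      omega
    have desc_im' : ∀ q, (i - 1, q) ∈ D' ↔ lNat D i ≤ q ∧ q ≤ rRow D (i-1) := by
      intro q
      rw [rowA_im_mem hv hA, memD_im, haffA]
      omega
    have hrm' : rRow D' (i - 1) = rRow D (i-1) := rRow_of_desc desc_im' (by omega)
    have hnem' : (row D' (i-1)).Nonempty := nonempty_of_desc desc_im' (by omega)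
    have hri' : (row D' i).Nonempty → rRow D' i = rRow D i := by
      intro hne'
      obtain ⟨x, hx⟩ := hne'
      have := (desc_i' x).1 (mem_row.1 hx)
      exact rRow_of_desc desc_i' (by omega)
    refine ⟨hgrid', ?_, ?_⟩
    · intro p q
      by_cases hp1 : p = i
      · obtain rfl : i = p := hp1.symm; exact iv_of_desc desc_i' q
      · by_cases hp2 : p = i - 1
        · subst hp2; exact iv_of_desc desc_im' q
        · exact iv_transfer (rowA_other_mem hv hA hp1 hp2) (hIv p) q
    · intro p q hpq hnep' hneq'
      have hother : ∀ r, r ≠ i → r ≠ i - 1 → row D' r = row D r :=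
        fun r h1 h2 => row_eq_of_mem_iff (rowA_other_mem hv hA h1 h2)
      by_cases hq1 : q = i
      · obtain rfl : i = q := hq1.symm
        rw [hri' hneq']
        by_cases hp2 : p = i - 1
        · subst hp2; rw [hrm']
          exact hR (i-1) i (by omega) hne hnei
        · have hp1 : p ≠ i := by omega
          rw [rRow_eq_of_row_eq (hother p hp1 hp2)]
          exact hR p i hpq ((hother p hp1 hp2) ▸ hnep') hnei
      · by_cases hq2 : q = i - 1
        · subst hq2
          rw [hrm']
          have hp1 : p ≠ i := by omega
          have hp2 : p ≠ i - 1 := by omega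
          rw [rRow_eq_of_row_eq (hother p hp1 hp2)]
          exact hR p (i-1) hpq ((hother p hp1 hp2) ▸ hnep') hne
        · rw [rRow_eq_of_row_eq (hother q hq1 hq2)]
          have hneq : (row D q).Nonempty := (hother q hq1 hq2) ▸ hneq'
          by_cases hp1 : p = i
          · obtain rfl : i = p := hp1.symm
            rw [hri' hnep']
            exact hR i q hpq hnei hneq
          · by_cases hp2 : p = i - 1
            · subst hp2; rw [hrm']
              exact hR (i-1) q hpq hne hneq
            · rw [rRow_eq_of_row_eq (hother p hp1 hp2)]
              exact hR p q hpq ((hother p hp1 hp2) ▸ hnep') hneq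

end StepAInv2
section StepB
variable {k w : ℕ} {D D' : Dg} {i : ℕ}

/-- rows affected by step B (within row bound `k`). -/
noncomputable def affB (D : Dg) (i k : ℕ) : Finset ℕ :=
  (Finset.Icc i k).filter (fun p => lRow D p = lRow D i)

lemma rRow_empty {p : ℕ} (h : row D p = ∅) : rRow D p = 0 := by
  rw [rRow, h]; rfl

lemma affB_row_nonempty (hv : Violation D i) {p : ℕ} (hp : p ∈ affB D i k) :
    (row D p).Nonempty := by
  rw [affB, Finset.mem_filter] at hp
  refine row_nonempty_iff.2 ?_
  rw [hp.2]
  exact row_nonempty_iff.1 (violation_row_nonempty hv)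

lemma mem_affB (hgrid : ∀ b ∈ D, 1 ≤ b.1 ∧ b.1 ≤ k ∧ 1 ≤ b.2 ∧ b.2 ≤ w)
    (hv : Violation D i) {p : ℕ} : p ∈ affB D i k ↔ BRow D i p := by
  rw [affB, Finset.mem_filter, Finset.mem_Icc]
  constructor
  · rintro ⟨⟨h1, _⟩, h2⟩; exact ⟨h1, h2⟩
  · rintro ⟨h1, h2⟩
    have hne : (row D p).Nonempty := by
      refine row_nonempty_iff.2 ?_
      rw [h2]; exact row_nonempty_iff.1 (violation_row_nonempty hv)
    exact ⟨⟨h1, (hgrid _ (lNat_mem hne)).2.1⟩, h2⟩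

lemma stepB_eq (hgrid : ∀ b ∈ D, 1 ≤ b.1 ∧ b.1 ≤ k ∧ 1 ≤ b.2 ∧ b.2 ≤ w)
    (hv : Violation D i) (hB : IsStepB D D' i) :
    D' = (D \ (affB D i k).image (fun p => (p, lNat D p))) ∪
      (affB D i k).image (fun p => (p, rRow D p + 1)) := by
  ext ⟨p, q⟩
  simp only [Finset.mem_union, Finset.mem_sdiff, Finset.mem_image, Prod.mk.injEq]
  obtain ⟨h1, h2⟩ := hB p q
  by_cases hp : BRow D i p
  · have hpB : p ∈ affB D i k := (mem_affB hgrid hv).2 hp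
    have hne : (row D p).Nonempty := affB_row_nonempty hv hpB
    have hflip : ((q : ℕ∞) ≠ lRow D p) ↔ q ≠ lNat D p := by
      rw [lRow_eq_lNat hne]
      exact_mod_cast Iff.rfl
    rw [h1 hp]
    constructor
    · rintro (⟨hm, hq⟩ | hq)
      · refine Or.inl ⟨hm, ?_⟩
        rintro ⟨a, ha, rfl, hsnd⟩
        exact (hflip.1 hq) hsnd.symm
      · exact Or.inr ⟨p, hpB, rfl, hq.symm⟩
    · rintro (⟨hm, hno⟩ | ⟨a, ha, rfl, rfl⟩)
      · refine Or.inl ⟨hm, hflip.2 ?_⟩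
        intro hq
        exact hno ⟨p, hpB, rfl, hq.symm⟩
      · exact Or.inr rfl
  · have hpB : p ∉ affB D i k := fun hc => hp ((mem_affB hgrid hv).1 hc)
    rw [h2 hp]
    constructor
    · intro hm
      refine Or.inl ⟨hm, ?_⟩
      rintro ⟨a, ha, rfl, _⟩
      exact hpB ha
    · rintro (⟨hm, _⟩ | ⟨a, ha, rfl, _⟩)
      · exact hm
      · exact absurd ha hpB

lemma lmono_of_max (hmax : MaxViolation D i) :
    ∀ a b : ℕ, i ≤ a → a ≤ b → lRow D a ≤ lRow D b := by
  have h2i : 2 ≤ i := hmax.1.1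
  intro a b ha hab
  induction b, hab using Nat.le_induction with
  | base => exact le_refl _
  | succ b hab ih =>
    refine le_trans ih ?_
    by_contra hlt
    push_neg at hlt
    have hviol : Violation D (b + 1) := ⟨by omega, by simpa using hlt⟩
    have := hmax.2 _ hviol
    omega

lemma stepB_invD (hinv : InvD k w D) (hmax : MaxViolation D i) (hok : StepBOk D i)
    (hB : IsStepB D D' i) : InvD k w D' := by
  obtain ⟨hgrid, hIv, hR⟩ := hinv
  have hv := hok.1
  have h2i : 2 ≤ i := hv.1
  have hnei : (row D i).Nonempty := violation_row_nonempty hv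
  have hri1 : 1 ≤ rRow D i :=
    le_trans (hgrid _ (lNat_mem hnei)).2.2.1 (lNat_le_rRow hnei)
  have hnem : (row D (i-1)).Nonempty := by
    rcases Finset.eq_empty_or_nonempty (row D (i-1)) with he | h
    · exfalso; have := rRow_empty (D := D) he; have := hok.2; omega
    · exact h
  have hrr : rRow D i + 1 ≤ rRow D (i-1) := by have := hok.2; omega
  have hrmw : rRow D (i-1) ≤ w := (hgrid _ (rRow_mem hnem)).2.2.2
  -- r_p ≤ r_i for affected rows
  have hrle : ∀ p ∈ affB D i k, rRow D p ≤ rRow D i := by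
    intro p hp
    have hne := affB_row_nonempty hv hp
    rcases eq_or_lt_of_le ((mem_affB hgrid hv).1 hp).1 with rfl | hlt
    · exact le_refl _
    · exact hR i p hlt hnei hne
  -- description of affected rows in D'
  have desc : ∀ p ∈ affB D i k, ∀ q, (p, q) ∈ D' ↔ lNat D p + 1 ≤ q ∧ q ≤ rRow D p + 1 := by
    intro p hp q
    have hBp : BRow D i p := (mem_affB hgrid hv).1 hp
    have hne := affB_row_nonempty hv hp
    have hflip : ((q : ℕ∞) ≠ lRow D p) ↔ q ≠ lNat D p := by
      rw [lRow_eq_lNat hne]; exact_mod_cast Iff.rfl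
    rw [(hB p q).1 hBp, hflip, mem_iff_of_inv ⟨hgrid, hIv, hR⟩ hne]
    have := lNat_le_rRow hne
    omega
  have hother : ∀ p, p ∉ affB D i k → ∀ q, ((p, q) ∈ D' ↔ (p, q) ∈ D) := by
    intro p hp q
    exact (hB p q).2 (fun hc => hp ((mem_affB hgrid hv).2 hc))
  have hrow_other : ∀ p, p ∉ affB D i k → row D' p = row D p :=
    fun p hp => row_eq_of_mem_iff (hother p hp)
  have hlnr : ∀ p ∈ affB D i k, lNat D p ≤ rRow D p :=
    fun p hp => lNat_le_rRow (affB_row_nonempty hv hp)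
  have hr' : ∀ p ∈ affB D i k, rRow D' p = rRow D p + 1 :=
    fun p hp => rRow_of_desc (desc p hp) (by have := hlnr p hp; omega)
  have hne' : ∀ p ∈ affB D i k, (row D' p).Nonempty :=
    fun p hp => nonempty_of_desc (desc p hp) (by have := hlnr p hp; omega)
  refine ⟨?_, ?_, ?_⟩
  · -- grid
    intro b hb
    rw [stepB_eq hgrid hv hB, Finset.mem_union] at hb
    rcases hb with hb | hb
    · exact hgrid _ (Finset.mem_sdiff.1 hb).1
    · rw [Finset.mem_image] at hb
      obtain ⟨p, hp, rfl⟩ := hb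
      have hple := hrle p hp
      have hpIcc := Finset.mem_Icc.1 (Finset.mem_filter.1 hp).1
      exact ⟨by omega, by omega, by omega, by omega⟩
  · -- intervals
    intro p q
    by_cases hp : p ∈ affB D i k
    · exact iv_of_desc (desc p hp) q
    · exact iv_transfer (hother p hp) (hIv p) q
  · -- r monotone
    intro p q hpq hnep' hneq'
    by_cases hq : q ∈ affB D i k
    · rw [hr' q hq]
      have hneq := affB_row_nonempty hv hq
      by_cases hp : p ∈ affB D i k
      · rw [hr' p hp]
        have hnep := affB_row_nonempty hv hp
        exact Nat.add_le_add_right (hR p q hpq hnep hneq) 1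
      · rw [rRow_eq_of_row_eq (hrow_other p hp)]
        have hnep : (row D p).Nonempty := (hrow_other p hp) ▸ hnep'
        rcases lt_or_ge p i with hpi | hpi
        · -- p above the block
          have h1 : rRow D q ≤ rRow D i := hrle q hq
          have h2 : rRow D (i-1) ≤ rRow D p := by
            rcases eq_or_lt_of_le (show p ≤ i - 1 by omega) with rfl | hlt
            · exact le_refl _
            · exact hR p (i-1) hlt hnep hnem
          omega
        · -- p inside the block range but not affected: impossible
          exfalso
          have hBq : BRow D i q := (mem_affB hgrid hv).1 hq
          have hl1 : lRow D i ≤ lRow D p := lmono_of_max hmax i p (le_refl i) hpi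
          have hl2 : lRow D p ≤ lRow D q := lmono_of_max hmax p q hpi (le_of_lt hpq)
          have : lRow D p = lRow D i := le_antisymm (hBq.2 ▸ hl2) hl1
          exact hp ((mem_affB hgrid hv).2 ⟨hpi, this⟩)
    · rw [rRow_eq_of_row_eq (hrow_other q hq)]
      have hneq : (row D q).Nonempty := (hrow_other q hq) ▸ hneq'
      by_cases hp : p ∈ affB D i k
      · rw [hr' p hp]
        have hnep := affB_row_nonempty hv hp
        exact le_trans (hR p q hpq hnep hneq) (by omega)
      · rw [rRow_eq_of_row_eq (hrow_other p hp)]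
        exact hR p q hpq ((hrow_other p hp) ▸ hnep') hneq

end StepB
section Measure
variable {k w : ℕ} {D D' : Dg} {i : ℕ}

lemma sum_swap_formula {X Y : Dg} (hD' : D' = (D \ X) ∪ Y) (hX : X ⊆ D)
    (hY : ∀ b ∈ Y, b ∉ D) (f : ℕ × ℕ → ℕ) :
    ∑ b ∈ D', f b + ∑ b ∈ X, f b = ∑ b ∈ D, f b + ∑ b ∈ Y, f b := by
  have hdisj : Disjoint (D \ X) Y := by
    rw [Finset.disjoint_right]
    intro b hb hb'
    exact hY b hb (Finset.mem_sdiff.1 hb').1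
  rw [hD', Finset.sum_union hdisj]
  have := Finset.sum_sdiff (f := f) hX
  omega

/-- the measure -/
def msr (k w : ℕ) (D : Dg) : ℕ :=
  (∑ b ∈ D, b.1) * (k * w * w + 1) + (k * w * w + 1 - ∑ b ∈ D, b.2)

lemma SQ_bound (hgrid : ∀ b ∈ D, 1 ≤ b.1 ∧ b.1 ≤ k ∧ 1 ≤ b.2 ∧ b.2 ≤ w) :
    ∑ b ∈ D, b.2 ≤ k * w * w := by
  have hsub : D ⊆ Finset.Icc 1 k ×ˢ Finset.Icc 1 w := by
    intro b hb
    rw [Finset.mem_product, Finset.mem_Icc, Finset.mem_Icc]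
    have := hgrid b hb
    omega
  calc ∑ b ∈ D, b.2 ≤ ∑ _b ∈ D, w := Finset.sum_le_sum (fun b hb => (hgrid b hb).2.2.2)
    _ = D.card * w := by rw [Finset.sum_const, smul_eq_mul]
    _ ≤ (k * w) * w := by
        have := Finset.card_le_card hsub
        rw [Finset.card_product, Nat.card_Icc, Nat.card_Icc] at this
        have hc : D.card ≤ k * w := by simpa using this
        exact Nat.mul_le_mul_right w hc

lemma stepA_measure (hinv : InvD k w D) (hok : StepAOk D i) (hA : IsStepA D D' i) :
    msr k w D' < msr k w D := by
  have hv := hok.1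
  have h2i : 2 ≤ i := hv.1
  have hformula := sum_swap_formula (stepA_eq hv hA)
    (by intro b hb
        rw [Finset.mem_image] at hb
        obtain ⟨a, ha, rfl⟩ := hb
        exact (mem_affA.1 ha).1)
    (by intro b hb
        rw [Finset.mem_image] at hb
        obtain ⟨a, ha, rfl⟩ := hb
        exact not_memA_up (inL_of_affA ha))
  have hinj1 : ∀ x ∈ affA D i, ∀ y ∈ affA D i,
      (fun q => ((i : ℕ), q)) x = (fun q => ((i : ℕ), q)) y → x = y := by
    intro x _ y _ h; exact (Prod.mk.injEq .. ▸ h).2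
  have hinj2 : ∀ x ∈ affA D i, ∀ y ∈ affA D i,
      (fun q => (i - 1, q)) x = (fun q => (i - 1, q)) y → x = y := by
    intro x _ y _ h; exact (Prod.mk.injEq .. ▸ h).2
  have hcard : 1 ≤ (affA D i).card :=
    Finset.card_pos.2 ⟨lNat D i, lNat_mem_affA hv⟩
  -- first components
  have hfst := hformula Prod.fst
  rw [Finset.sum_image hinj1, Finset.sum_image hinj2] at hfst
  simp only [Finset.sum_const, smul_eq_mul] at hfst
  have hSP : ∑ b ∈ D', b.1 < ∑ b ∈ D, b.1 := by
    obtain ⟨j, rfl⟩ : ∃ j, i = j + 1 := ⟨i - 1, by omega⟩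
    simp only [Nat.add_sub_cancel] at hfst
    have hmul : (affA D (j+1)).card * (j + 1) = (affA D (j+1)).card * j + (affA D (j+1)).card := by ring
    omega
  -- second components
  have hsnd := hformula Prod.snd
  rw [Finset.sum_image hinj1, Finset.sum_image hinj2] at hsnd
  dsimp only at hsnd
  have hSQ : ∑ b ∈ D', b.2 = ∑ b ∈ D, b.2 := by omega
  have hle : ∑ b ∈ D, b.2 ≤ k * w * w := SQ_bound hinv.1
  rw [msr, msr, hSQ]
  have := (Nat.mul_lt_mul_right (show 0 < k * w * w + 1 by omega)).2 hSP
  omega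

lemma stepB_measure (hinv : InvD k w D) (hmax : MaxViolation D i) (hok : StepBOk D i)
    (hB : IsStepB D D' i) : msr k w D' < msr k w D := by
  obtain ⟨hgrid, hIv, hR⟩ := hinv
  have hv := hok.1
  have h2i : 2 ≤ i := hv.1
  have hnei : (row D i).Nonempty := violation_row_nonempty hv
  have hik : i ≤ k := (hgrid _ (lNat_mem hnei)).2.1
  have hiB : i ∈ affB D i k := by
    rw [affB, Finset.mem_filter, Finset.mem_Icc]
    exact ⟨⟨le_refl i, hik⟩, rfl⟩
  have hformula := sum_swap_formula (stepB_eq hgrid hv hB)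
    (by intro b hb
        rw [Finset.mem_image] at hb
        obtain ⟨p, hp, rfl⟩ := hb
        exact lNat_mem (affB_row_nonempty hv hp))
    (by intro b hb
        rw [Finset.mem_image] at hb
        obtain ⟨p, hp, rfl⟩ := hb
        intro hc
        exact absurd (le_rRow hc) (by omega))
  have hinj1 : ∀ x ∈ affB D i k, ∀ y ∈ affB D i k,
      (fun p => (p, lNat D p)) x = (fun p => (p, lNat D p)) y → x = y := by
    intro x _ y _ h; exact (Prod.mk.injEq .. ▸ h).1
  have hinj2 : ∀ x ∈ affB D i k, ∀ y ∈ affB D i k,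
      (fun p => (p, rRow D p + 1)) x = (fun p => (p, rRow D p + 1)) y → x = y := by
    intro x _ y _ h; exact (Prod.mk.injEq .. ▸ h).1
  have hfst := hformula Prod.fst
  rw [Finset.sum_image hinj1, Finset.sum_image hinj2] at hfst
  dsimp only at hfst
  have hSP : ∑ b ∈ D', b.1 = ∑ b ∈ D, b.1 := by omega
  have hsnd := hformula Prod.snd
  rw [Finset.sum_image hinj1, Finset.sum_image hinj2] at hsnd
  dsimp only at hsnd
  have hlt : ∑ p ∈ affB D i k, lNat D p < ∑ p ∈ affB D i k, (rRow D p + 1) := by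
    apply Finset.sum_lt_sum_of_nonempty ⟨i, hiB⟩
    intro p hp
    have := lNat_le_rRow (affB_row_nonempty hv hp)
    omega
  have hSQ : ∑ b ∈ D, b.2 < ∑ b ∈ D', b.2 := by omega
  have hinv' : InvD k w D' := stepB_invD ⟨hgrid, hIv, hR⟩ hmax hok hB
  have hle : ∑ b ∈ D', b.2 ≤ k * w * w := SQ_bound hinv'.1
  rw [msr, msr, hSP]
  omega

lemma algStep_main (hinv : InvD k w D) (hstep : AlgStep D D') :
    InvD k w D' ∧ msr k w D' < msr k w D := by
  obtain ⟨i, hmax, hcase⟩ := hstep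
  rcases hcase with ⟨hok, hA⟩ | ⟨hok, hB⟩
  · exact ⟨stepA_invD hinv hok hA, stepA_measure hinv hok hA⟩
  · exact ⟨stepB_invD hinv hmax hok hB, stepB_measure hinv hmax hok hB⟩

end Measure
section Final
variable {k w : ℕ}

lemma mem_skewD {lam mu : ℕ → ℕ} {k p q : ℕ} :
    (p, q) ∈ skewD lam mu k ↔ (1 ≤ p ∧ p ≤ k ∧ mu p + 1 ≤ q ∧ q ≤ lam p) := by
  simp only [skewD, Finset.mem_biUnion, Finset.mem_Icc, Finset.mem_image, Prod.mk.injEq]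
  constructor
  · rintro ⟨a, ⟨h1, h2⟩, b, hb, rfl, rfl⟩
    exact ⟨h1, h2, hb.1, hb.2⟩
  · rintro ⟨h1, h2, h3, h4⟩
    exact ⟨p, ⟨h1, h2⟩, q, ⟨h3, h4⟩, rfl, rfl⟩

lemma partition_mono {f : ℕ → ℕ} (hf : IsPartition f) :
    ∀ a b : ℕ, 1 ≤ a → a ≤ b → f b ≤ f a := by
  intro a b ha hab
  induction b, hab using Nat.le_induction with
  | base => exact le_refl _
  | succ b hab ih => exact le_trans (hf.2 b (by omega)) ih

lemma skew_invD {lam mu : ℕ → ℕ} (hlam : IsPartition lam) (hmu : IsPartition mu)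
    (hsub : ∀ p, mu p ≤ lam p) : InvD k (lam 1) (skewD lam mu k) := by
  have hdesc : ∀ p, 1 ≤ p → p ≤ k →
      ∀ q, (p, q) ∈ skewD lam mu k ↔ mu p + 1 ≤ q ∧ q ≤ lam p := by
    intro p h1 h2 q
    rw [mem_skewD]
    omega
  have hempty : ∀ p, ¬(1 ≤ p ∧ p ≤ k) → ∀ q, (p, q) ∉ skewD lam mu k := by
    intro p hp q hq
    rw [mem_skewD] at hq
    exact hp ⟨hq.1, hq.2.1⟩
  refine ⟨?_, ?_, ?_⟩
  · intro b hb
    obtain ⟨b1, b2⟩ := b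
    rw [mem_skewD] at hb
    exact ⟨hb.1, hb.2.1, by omega, le_trans hb.2.2.2 (partition_mono hlam 1 b1 le_rfl hb.1)⟩
  · intro p q hne
    by_cases hp : 1 ≤ p ∧ p ≤ k
    · exact iv_of_desc (hdesc p hp.1 hp.2) q hne
    · exfalso
      obtain ⟨x, hx⟩ := hne
      exact hempty p hp x (mem_row.1 hx)
  · intro p q hpq hnep hneq
    obtain ⟨x, hx⟩ := hnep
    obtain ⟨y, hy⟩ := hneq
    have hxm := mem_skewD.1 (mem_row.1 hx)
    have hym := mem_skewD.1 (mem_row.1 hy)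
    rw [rRow_of_desc (hdesc p hxm.1 hxm.2.1) (by omega),
        rRow_of_desc (hdesc q hym.1 hym.2.1) (by omega)]
    exact partition_mono hlam p q hxm.1 (le_of_lt hpq)

lemma terminal_lmono {D : Dg} (hT : TerminalD D) :
    ∀ p q, 1 ≤ p → p ≤ q → lRow D p ≤ lRow D q := by
  intro p q hp hpq
  induction q, hpq using Nat.le_induction with
  | base => exact le_refl _
  | succ b hab ih =>
    refine le_trans ih ?_
    have := hT (b + 1)
    rw [Violation, not_and] at this
    have h2 := this (by omega)
    push_neg at h2
    simpa using h2

lemma card_row {D : Dg} (hinv : InvD k w D) {p : ℕ} (hne : (row D p).Nonempty) :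
    (row D p).card = rRow D p + 1 - lNat D p := by
  have : row D p = Finset.Icc (lNat D p) (rRow D p) := by
    ext q
    rw [mem_row, mem_iff_of_inv hinv hne, Finset.mem_Icc]
  rw [this, Nat.card_Icc]

lemma chain_inv : ∀ (L : List Dg) (D0 Dl : Dg), L.Chain' AlgStep →
    L.head? = some D0 → InvD k w D0 → L.getLast? = some Dl → InvD k w Dl := by
  intro L
  induction L with
  | nil => intro D0 Dl _ h; simp at h
  | cons a L ih =>
    intro D0 Dl hchain hhead hinv hlast
    simp only [List.head?_cons, Option.some.injEq] at hhead
    subst hhead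
    cases L with
    | nil =>
      simp only [List.getLast?_singleton, Option.some.injEq] at hlast
      subst hlast
      exact hinv
    | cons b L' =>
      rw [List.Chain', List.isChain_cons_cons] at hchain
      rw [List.getLast?_cons_cons] at hlast
      exact ih b Dl hchain.2 (by simp) (algStep_main hinv hchain.1).1 hlast

lemma sorted_getD {l : List ℕ} (h : List.Pairwise (· ≥ ·) l) (m : ℕ) :
    l.getD (m + 1) 0 ≤ l.getD m 0 := by
  by_cases hm : m + 1 < l.length
  · rw [List.getD_eq_getElem l 0 hm, List.getD_eq_getElem l 0 (by omega)]
    exact List.pairwise_iff_getElem.1 h m (m+1) (by omega) hm (by omega)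
  · rw [List.getD_eq_default l 0 (by omega)]
    exact Nat.zero_le _

lemma rowLengths_sorted {D : Dg} (hinv : InvD k w D) (hT : TerminalD D) :
    List.Pairwise (· ≥ ·) (rowLengths D) := by
  rw [rowLengths, List.pairwise_map]
  have hs : (rowIdx D).Pairwise (· ≤ ·) := Finset.pairwise_sort _ (· ≤ ·)
  refine List.Pairwise.imp_of_mem ?_ hs
  intro a b ha hb hab
  have hmem : ∀ x, x ∈ rowIdx D → (row D x).Nonempty := by
    intro x hx
    rw [rowIdx, Finset.mem_sort, Finset.mem_image] at hx
    obtain ⟨c, hc, rfl⟩ := hx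
    exact ⟨c.2, mem_row.2 (by rwa [Prod.mk.eta])⟩
  have hnea := hmem a ha
  have hneb := hmem b hb
  have ha1 : 1 ≤ a := (hinv.1 _ (lNat_mem hnea)).1
  rcases eq_or_lt_of_le hab with rfl | hlt
  · exact le_refl _
  · rw [card_row hinv hnea, card_row hinv hneb]
    have hr : rRow D b ≤ rRow D a := hinv.2.2 a b hlt hnea hneb
    have hl : lNat D a ≤ lNat D b := by
      have := terminal_lmono hT a b ha1 (le_of_lt hlt)
      rw [lRow_eq_lNat hnea, lRow_eq_lNat hneb] at this
      exact_mod_cast this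
    omega

end Final

/-- Algorithm 1 started at a skew Young diagram always terminates: there
is no infinite sequence of steps; moreover in any terminal diagram of an execution the
`l_i` are weakly increasing, the `r_i` are weakly decreasing along nonempty rows, and the
nonempty row lengths, read top to bottom, form a weakly decreasing sequence, i.e. the
Young diagram of a partition (justified to the northeast). -/
theorem statement5 (lam mu : ℕ → ℕ) (k : ℕ)
    (hlam : IsPartition lam) (hmu : IsPartition mu) (hsub : ∀ p, mu p ≤ lam p)
    (hbd : ∀ p, k < p → lam p = 0) :
    (∀ Dseq : ℕ → Dg, Dseq 0 = skewD lam mu k →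
      ¬ ∀ t, AlgStep (Dseq t) (Dseq (t + 1))) ∧
    (∀ (L : List Dg) (Dl : Dg), L.head? = some (skewD lam mu k) → L.Chain' AlgStep →
      L.getLast? = some Dl → TerminalD Dl →
      (∀ p q, 1 ≤ p → p ≤ q → lRow Dl p ≤ lRow Dl q) ∧
      (∀ p q, p < q → (row Dl p).Nonempty → (row Dl q).Nonempty → rRow Dl q ≤ rRow Dl p) ∧
      List.Pairwise (· ≥ ·) (rowLengths Dl) ∧
      ∃ ν : ℕ → ℕ, IsPartition ν ∧ ∀ m : ℕ, (rowLengths Dl).getD m 0 = ν (m + 1)) := by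

  have hinv0 : InvD k (lam 1) (skewD lam mu k) := skew_invD hlam hmu hsub
  constructor
  · intro Dseq h0 hall
    have hinv : ∀ t, InvD k (lam 1) (Dseq t) := by
      intro t
      induction t with
      | zero => rw [h0]; exact hinv0
      | succ t ih => exact (algStep_main ih (hall t)).1
    have hkey : ∀ t, msr k (lam 1) (Dseq t) + t ≤ msr k (lam 1) (Dseq 0) := by
      intro t
      induction t with
      | zero => omega
      | succ t ih =>
        have := (algStep_main (hinv t) (hall t)).2
        omega
    have := hkey (msr k (lam 1) (Dseq 0) + 1)
    omega
  · intro L Dl hhead hchain hlast hT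
    have hinv : InvD k (lam 1) Dl := chain_inv L _ Dl hchain hhead hinv0 hlast
    have hsorted := rowLengths_sorted hinv hT
    refine ⟨terminal_lmono hT, hinv.2.2, hsorted, ?_⟩
    refine ⟨fun m => if m = 0 then 0 else (rowLengths Dl).getD (m - 1) 0, ⟨?_, ?_⟩, ?_⟩
    · simp
    · intro p hp
      obtain ⟨j, rfl⟩ : ∃ j, p = j + 1 := ⟨p - 1, by omega⟩
      simp only [Nat.add_sub_cancel, if_neg (by omega : ¬(j + 1 + 1 = 0)),
        if_neg (by omega : ¬(j + 1 = 0))]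
      exact sorted_getD hsorted j
    · intro m
      simp
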